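/- Let H > 1 and P > 1 be real numbers and Č₂ > 0. For real parameters H and P, define L̂(η) = 1 − 1/P + (1 − 1/H²)·sinh²η and R₁(η) = cosh η + √(L̂(η)). Let Y₁ : (0,∞) → (0,∞) be differentiable and set r(η) = Č₂·sinh η·Y₁(η)/R₁(η). Then r satisfies r'(η) = r(η)/(P·R₁(η)·sinh η) for all η ∈ (0,∞) if and only if Y₁ satisfies (log Y₁)'(η) = (1/P − 1)/(sinh η·√(L̂(η))) for all η ∈ (0,∞). -/

import Mathlib

open Real Set

lemma key_alg (A P C₂ s c q Y Y' : ℝ) (hs : 0 < s) (hq : 0 < q) (hc : 0 < c)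
    (hY : 0 < Y) (hC : 0 < C₂) (hP : 1 < P)
    (hq2 : q ^ 2 = 1 - 1 / P + A * s ^ 2) (hc2 : c ^ 2 = 1 + s ^ 2) :
    ((C₂ * c * Y + C₂ * s * Y') * (c + q)
        - C₂ * s * Y * (s + A * (2 * s * c) / (2 * q))) / (c + q) ^ 2
      = C₂ * s * Y / (c + q) / (P * (c + q) * s)
    ↔ Y' / Y = (1 / P - 1) / (s * q) := by
  have hP0 : (0:ℝ) < P := lt_trans one_pos hP
  have hR : 0 < c + q := by positivity
  have hq2' : P * q ^ 2 = P - 1 + P * A * s ^ 2 := by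
    have h := hq2; field_simp at h; linear_combination h
  constructor
  · intro h
    field_simp at h
    field_simp
    refine mul_left_cancel₀ hR.ne' ?_
    linear_combination h - (P*q*Y) * hc2 - (c*Y) * hq2'
  · intro h
    field_simp at h
    field_simp
    linear_combination (c+q) * h + (P*q*Y) * hc2 + (c*Y) * hq2'

/-- Derivation of (5.14) from (5.7): with `r = Č₂·sinh η·Y₁/R₁`, the ODE
`r' = r/(P·R₁·sinh η)` holds iff `(log Y₁)' = (1/P − 1)/(sinh η·√L̂)`. -/
theorem stmt_8
    (H P C₂ : ℝ) (hH : 1 < H) (hP : 1 < P) (hC₂ : 0 < C₂)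
    (Lhat R₁ : ℝ → ℝ)
    (hLhat : ∀ η : ℝ, Lhat η = 1 - 1 / P + (1 - 1 / H ^ 2) * (Real.sinh η) ^ 2)
    (hR₁ : ∀ η : ℝ, R₁ η = Real.cosh η + Real.sqrt (Lhat η))
    (Y₁ : ℝ → ℝ)
    (hY₁pos : ∀ η ∈ Ioi (0:ℝ), 0 < Y₁ η)
    (hY₁diff : ∀ η ∈ Ioi (0:ℝ), DifferentiableAt ℝ Y₁ η)
    (r : ℝ → ℝ)
    (hr : ∀ η : ℝ, r η = C₂ * Real.sinh η * Y₁ η / R₁ η) :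
    (∀ η ∈ Ioi (0:ℝ),
        deriv r η = r η / (P * R₁ η * Real.sinh η))
      ↔
    (∀ η ∈ Ioi (0:ℝ),
        deriv (fun x => Real.log (Y₁ x)) η
          = (1 / P - 1) / (Real.sinh η * Real.sqrt (Lhat η))) := by
  have hLfun : Lhat = fun η => 1 - 1 / P + (1 - 1 / H ^ 2) * (Real.sinh η) ^ 2 :=
    funext hLhat
  have hRfun : R₁ = fun η => Real.cosh η + Real.sqrt (Lhat η) := funext hR₁
  have hrfun : r = fun η => C₂ * Real.sinh η * Y₁ η / R₁ η := funext hr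
  have hHsq : 1 - 1 / H ^ 2 ≥ 0 := by
    have h1 : (1:ℝ) < H ^ 2 := by nlinarith
    have : 1 / H ^ 2 < 1 := by
      rw [div_lt_one (by positivity)]; exact h1
    linarith
  have hP1 : (0:ℝ) < 1 - 1 / P := by
    have : 1 / P < 1 := by rw [div_lt_one (by linarith)]; exact hP
    linarith
  refine forall₂_congr fun η hη => ?_
  have hη' : (0:ℝ) < η := hη
  have hs : 0 < Real.sinh η := Real.sinh_pos_iff.2 hη'
  have hLp : 0 < Lhat η := by
    rw [hLhat]
    have := sq_nonneg (Real.sinh η)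
    nlinarith
  have hq : 0 < Real.sqrt (Lhat η) := Real.sqrt_pos.2 hLp
  have hc : 0 < Real.cosh η := Real.cosh_pos η
  have hR : 0 < R₁ η := by rw [hR₁]; positivity
  have hYp := hY₁pos η hη
  -- derivative of Lhat
  have hLd : HasDerivAt Lhat ((1 - 1 / H ^ 2) * (2 * Real.sinh η * Real.cosh η)) η := by
    rw [hLfun]
    have h1 : HasDerivAt (fun x : ℝ => (Real.sinh x) ^ 2)
        (2 * Real.sinh η ^ 1 * Real.cosh η) η := (Real.hasDerivAt_sinh η).pow 2
    have h2 := (h1.const_mul (1 - 1 / H ^ 2)).const_add (1 - 1 / P)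
    exact h2.congr_deriv (by ring)
  -- derivative of sqrt ∘ Lhat
  have hqd : HasDerivAt (fun x => Real.sqrt (Lhat x))
      ((1 - 1 / H ^ 2) * (2 * Real.sinh η * Real.cosh η) / (2 * Real.sqrt (Lhat η))) η :=
    hLd.sqrt hLp.ne'
  -- derivative of R₁
  have hRd : HasDerivAt R₁
      (Real.sinh η +
        (1 - 1 / H ^ 2) * (2 * Real.sinh η * Real.cosh η) / (2 * Real.sqrt (Lhat η))) η := by
    rw [hRfun]
    exact (Real.hasDerivAt_cosh η).add hqd
  have hYd : HasDerivAt Y₁ (deriv Y₁ η) η := (hY₁diff η hη).hasDerivAt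
  -- derivative of r
  have hNd : HasDerivAt (fun x => C₂ * Real.sinh x * Y₁ x)
      ((C₂ * Real.cosh η) * Y₁ η + (C₂ * Real.sinh η) * deriv Y₁ η) η :=
    (((Real.hasDerivAt_sinh η).const_mul C₂)).mul hYd
  have hrd : HasDerivAt r
      ((((C₂ * Real.cosh η) * Y₁ η + (C₂ * Real.sinh η) * deriv Y₁ η) * R₁ η
          - (C₂ * Real.sinh η * Y₁ η) *
            (Real.sinh η +
              (1 - 1 / H ^ 2) * (2 * Real.sinh η * Real.cosh η) / (2 * Real.sqrt (Lhat η))))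
        / (R₁ η) ^ 2) η := by
    rw [hrfun]
    exact hNd.div hRd hR.ne'
  have hld : HasDerivAt (fun x => Real.log (Y₁ x)) (deriv Y₁ η / Y₁ η) η :=
    hYd.log hYp.ne'
  rw [hrd.deriv, hld.deriv, hr η]
  have hq2 : (Real.sqrt (Lhat η)) ^ 2 = 1 - 1 / P + (1 - 1 / H ^ 2) * (Real.sinh η) ^ 2 := by
    rw [Real.sq_sqrt hLp.le]; exact hLhat η
  have hc2 : (Real.cosh η) ^ 2 = 1 + (Real.sinh η) ^ 2 := by rw [Real.cosh_sq]; ring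
  have := key_alg (1 - 1 / H ^ 2) P C₂ (Real.sinh η) (Real.cosh η)
    (Real.sqrt (Lhat η)) (Y₁ η) (deriv Y₁ η) hs hq hc hYp hC₂ hP hq2 hc2
  rw [hR₁ η]
  convert this using 2
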